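/- Let k be a field, Ω and X sets, and let R = k[W(Ω) × X] be the multivariate polynomial algebra on W(Ω) × X, where W(Ω) is the free monoid on Ω, equipped with the derivations D_ω determined by D_ω(X_{(w,x)}) = X_{(ω·w, x)}. For a monomial m of R, given by an exponent function m : W(Ω) × X → ℕ with finite support, define p(m) := Σ_{(w,x)} m(w,x)·(|w| − 1) ∈ ℤ, where |w| is the length of the word w; m is populated if p(m) = −1. Then the smallest k-submodule of R containing the generators X_{(1,x)} (x ∈ X, 1 the empty word) and closed under all the operations (a, b) ↦ a · D_ω(b) (ω ∈ Ω) equals the k-linear span of the populated monomials of R. -/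

import Mathlib

/-- The derivation `D_ω` on `k[W(Ω) × X]` determined by `D_ω X_{(w,x)} = X_{(ω·w, x)}`,
where `W(Ω)` is the free monoid on `Ω`. -/
noncomputable def novikovDeriv (k : Type*) [Field k] {Ω X : Type*} (ω : Ω) :
    Derivation k (MvPolynomial (FreeMonoid Ω × X) k) (MvPolynomial (FreeMonoid Ω × X) k) :=
  MvPolynomial.mkDerivation k fun p => MvPolynomial.X (FreeMonoid.of ω * p.1, p.2)

/-- For a monomial with exponent function `m`, `pCount m = Σ m(w,x)·(|w| − 1)`, the number of
derivation occurrences minus the number of variable occurrences. -/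
def pCount {Ω X : Type*} (m : (FreeMonoid Ω × X) →₀ ℕ) : ℤ :=
  m.sum fun p n => (n : ℤ) * ((p.1.length : ℤ) - 1)

/-- The set of populated monomials of `k[W(Ω) × X]`: monomials `m` with `pCount m = -1`. -/
def populatedMonomials (k : Type*) [Field k] (Ω X : Type*) :
    Set (MvPolynomial (FreeMonoid Ω × X) k) :=
  {u | ∃ m : (FreeMonoid Ω × X) →₀ ℕ, pCount m = -1 ∧ u = MvPolynomial.monomial m 1}

section Aux

open MvPolynomial

variable {k : Type*} [Field k] {Ω Y : Type*}

/-- helper: a single term is at most the Finsupp.sum, for ℕ-valued sums. -/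
lemma nmn_term_le_sum (f : (FreeMonoid Ω × Y) →₀ ℕ) (g : (FreeMonoid Ω × Y) → ℕ → ℕ)
    (hg : ∀ a, g a 0 = 0) (a : FreeMonoid Ω × Y) : g a (f a) ≤ f.sum g := by
  by_cases h : a ∈ f.support
  · exact Finset.single_le_sum (f := fun a => g a (f a)) (fun i _ => Nat.zero_le _) h
  · rw [Finsupp.notMem_support_iff.mp h, hg]; exact Nat.zero_le _

lemma nmn_pCount_add (a b : (FreeMonoid Ω × Y) →₀ ℕ) :
    pCount (a + b) = pCount a + pCount b := by
  unfold pCount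
  rw [Finsupp.sum_add_index' (by simp) (by intros; push_cast; ring)]

lemma nmn_pCount_single (p : FreeMonoid Ω × Y) (n : ℕ) :
    pCount (Finsupp.single p n) = (n : ℤ) * ((p.1.length : ℤ) - 1) := by
  unfold pCount
  rw [Finsupp.sum_single_index (by simp)]

/-- the weight measure used for the induction: `Σ m(p) · |p.1|²`. -/
def nmnWeight {Ω Y : Type*} (m : (FreeMonoid Ω × Y) →₀ ℕ) : ℕ :=
  m.sum fun p n => n * (p.1.length * p.1.length)

lemma nmn_weight_add (a b : (FreeMonoid Ω × Y) →₀ ℕ) :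
    nmnWeight (a + b) = nmnWeight a + nmnWeight b := by
  unfold nmnWeight
  rw [Finsupp.sum_add_index' (by simp) (by intros; ring)]

lemma nmn_weight_single (p : FreeMonoid Ω × Y) (n : ℕ) :
    nmnWeight (Finsupp.single p n) = n * (p.1.length * p.1.length) := by
  unfold nmnWeight
  rw [Finsupp.sum_single_index (by simp)]

/-- extraction of a sub-Finsupp of prescribed total degree -/
lemma nmn_extract (f : (FreeMonoid Ω × Y) →₀ ℕ) :
    ∀ n : ℕ, n ≤ f.sum (fun _ k => k) → ∃ g, g ≤ f ∧ g.sum (fun _ k => k) = n := by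
  intro n
  induction n with
  | zero => exact fun _ => ⟨0, zero_le, Finsupp.sum_zero_index⟩
  | succ n ih =>
    intro h
    obtain ⟨g, hg, hsum⟩ := ih (Nat.le_of_succ_le h)
    have hex : ∃ a, g a < f a := by
      by_contra hc
      push_neg at hc
      have : f = g := le_antisymm (Finsupp.le_def.mpr hc) hg
      rw [this, hsum] at h
      omega
    obtain ⟨a, ha⟩ := hex
    refine ⟨g + Finsupp.single a 1, ?_, ?_⟩
    · rw [Finsupp.le_def]
      intro b
      rcases eq_or_ne a b with rfl | hne
      · simpa using ha
      · simp [Finsupp.single_apply, hne, (Finsupp.le_def.mp hg b)]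
    · rw [Finsupp.sum_add_index' (by simp) (fun _ _ _ => rfl),
        Finsupp.sum_single_index (by simp), hsum]

lemma nmn_deriv_monomial (ω : Ω) (s : (FreeMonoid Ω × Y) →₀ ℕ) :
    novikovDeriv k (X := Y) ω (monomial s 1) =
      ∑ p ∈ s.support, (s p : k) •
        monomial (s - Finsupp.single p 1 + Finsupp.single (FreeMonoid.of ω * p.1, p.2) 1) 1 := by
  rw [novikovDeriv, mkDerivation_monomial, one_smul, Finsupp.sum]
  refine Finset.sum_congr rfl fun p hp => ?_
  rw [smul_eq_mul, MvPolynomial.X, monomial_mul, mul_one, smul_monomial, smul_eq_mul, mul_one]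

lemma nmn_mul_deriv_monomial (ω : Ω) (m s : (FreeMonoid Ω × Y) →₀ ℕ) :
    monomial m 1 * novikovDeriv k (X := Y) ω (monomial s 1) =
      ∑ p ∈ s.support, (s p : k) •
        monomial (m + (s - Finsupp.single p 1 + Finsupp.single (FreeMonoid.of ω * p.1, p.2) 1)) 1 := by
  rw [nmn_deriv_monomial, Finset.mul_sum]
  refine Finset.sum_congr rfl fun p hp => ?_
  rw [mul_smul_comm, monomial_mul, one_mul]

/-- pCount of the exponent of a term of `X^m · D_ω X^s` is `-1` when both are populated. -/
lemma nmn_pCount_term {s : (FreeMonoid Ω × Y) →₀ ℕ} {p : FreeMonoid Ω × Y}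
    (hp : p ∈ s.support) (m : (FreeMonoid Ω × Y) →₀ ℕ) (ω : Ω)
    (hm : pCount m = -1) (hs : pCount s = -1) :
    pCount (m + (s - Finsupp.single p 1 + Finsupp.single (FreeMonoid.of ω * p.1, p.2) 1)) = -1 := by
  have hle : Finsupp.single p 1 ≤ s :=
    Finsupp.single_le_iff.mpr (Nat.one_le_iff_ne_zero.mpr (Finsupp.mem_support_iff.mp hp))
  have hsub : (s - Finsupp.single p 1) + Finsupp.single p 1 = s := tsub_add_cancel_of_le hle
  have h1 : pCount (s - Finsupp.single p 1) = -1 - ((p.1.length : ℤ) - 1) := by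
    have h := congrArg pCount hsub
    rw [nmn_pCount_add, nmn_pCount_single, hs] at h
    push_cast at h
    linarith
  rw [nmn_pCount_add, nmn_pCount_add, nmn_pCount_single, h1, hm]
  have hlen : ((FreeMonoid.of ω * p.1).length : ℤ) = (p.1.length : ℤ) + 1 := by
    rw [FreeMonoid.length_mul, FreeMonoid.length_of]; push_cast; ring
  rw [hlen]
  push_cast
  ring

/-- Base case: populated monomials all of whose variables have empty words are generators. -/
lemma nmn_key_base (N : Submodule k (MvPolynomial (FreeMonoid Ω × Y) k))
    (hX : ∀ y : Y, MvPolynomial.X (1, y) ∈ N)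
    (m : (FreeMonoid Ω × Y) →₀ ℕ) (hpc : pCount m = -1)
    (hall : ∀ p ∈ m.support, p.1.length = 0) : monomial m 1 ∈ N := by
  classical
  have hdeg : m.sum (fun _ n => n) = 1 := by
    have h1 : pCount m = -∑ p ∈ m.support, (m p : ℤ) := by
      unfold pCount
      rw [Finsupp.sum, ← Finset.sum_neg_distrib]
      refine Finset.sum_congr rfl fun p hp => ?_
      rw [hall p hp]
      push_cast
      ring
    have h2 : ∑ p ∈ m.support, (m p : ℤ) = 1 := by
      rw [hpc] at h1
      linarith
    have h3 : ((m.sum fun _ n => n : ℕ) : ℤ) = ∑ p ∈ m.support, (m p : ℤ) := by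
      rw [Finsupp.sum]
      push_cast
      rfl
    exact_mod_cast h3.trans h2
  obtain ⟨p, hp⟩ : ∃ p, p ∈ m.support := by
    by_contra h
    push_neg at h
    have hm0 : m = 0 := by
      ext q
      by_contra hq
      exact h q (Finsupp.mem_support_iff.mpr hq)
    rw [hm0, Finsupp.sum_zero_index] at hdeg
    omega
  have hmp : m p = 1 := by
    have h1 : m p ≤ 1 := hdeg ▸ nmn_term_le_sum m (fun _ n => n) (fun _ => rfl) p
    have h2 : m p ≠ 0 := Finsupp.mem_support_iff.mp hp
    omega
  have hm : m = Finsupp.single p 1 := by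
    ext q
    rcases eq_or_ne q p with rfl | hne
    · simp [hmp]
    · rw [Finsupp.single_apply, if_neg (Ne.symm hne)]
      by_contra hq
      have hqs : q ∈ m.support := Finsupp.mem_support_iff.mpr hq
      have hsub : ({p, q} : Finset (FreeMonoid Ω × Y)) ⊆ m.support := by
        intro r hr
        rcases Finset.mem_insert.mp hr with rfl | hr
        · exact hp
        · rwa [Finset.mem_singleton.mp hr]
      have hle : ∑ r ∈ ({p, q} : Finset (FreeMonoid Ω × Y)), m r ≤ m.sum fun _ n => n :=
        Finset.sum_le_sum_of_subset hsub
      rw [Finset.sum_pair hne.symm, hdeg] at hle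
      omega
  have hp1 : p.1 = 1 := FreeMonoid.length_eq_zero.mp (hall p hp)
  have hXp : MvPolynomial.X (R := k) p = monomial m 1 := by rw [hm]; rfl
  have hpe : ((1 : FreeMonoid Ω), p.2) = p := by rw [← hp1]
  rw [← hXp, ← hpe]
  exact hX p.2


/-- Main induction: every populated monomial lies in every submodule that contains the
generators and is closed under the Novikov operations. -/
lemma nmn_key (N : Submodule k (MvPolynomial (FreeMonoid Ω × Y) k))
    (hX : ∀ y : Y, MvPolynomial.X (1, y) ∈ N)
    (hmul : ∀ (ω : Ω) (a b : MvPolynomial (FreeMonoid Ω × Y) k),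
      a ∈ N → b ∈ N → a * novikovDeriv k ω b ∈ N) :
    ∀ (n : ℕ) (m : (FreeMonoid Ω × Y) →₀ ℕ), nmnWeight m ≤ n → pCount m = -1 →
      monomial m 1 ∈ N := by
  classical
  intro n
  induction n with
  | zero =>
    intro m hmw hpc
    refine nmn_key_base N hX m hpc fun p hp => ?_
    have h1 := nmn_term_le_sum m (fun p n => n * (p.1.length * p.1.length)) (fun _ => by simp) p
    have h2 : m p ≠ 0 := Finsupp.mem_support_iff.mp hp
    have h3 : nmnWeight m = 0 := Nat.le_zero.mp hmw
    unfold nmnWeight at h3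
    rw [h3] at h1
    have := Nat.mul_eq_zero.mp (Nat.le_zero.mp h1)
    rcases this with h | h
    · exact absurd h h2
    · exact Nat.mul_eq_zero.mp h |>.elim (fun h => h) (fun h => h)
  | succ n ih =>
    intro m hmw hpc
    by_cases hbase : ∀ p ∈ m.support, p.1.length = 0
    · exact nmn_key_base N hX m hpc hbase
    push_neg at hbase
    obtain ⟨q, hq, hqlen⟩ := hbase
    obtain ⟨ω, w', hw⟩ : ∃ ω w', q.1 = FreeMonoid.of ω * w' := by
      rcases hl : FreeMonoid.toList q.1 with _ | ⟨ω, t⟩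
      · exact absurd (FreeMonoid.length_eq_zero.mpr (by
          rw [← FreeMonoid.ofList_toList q.1, hl]; rfl)) hqlen
      · exact ⟨ω, FreeMonoid.ofList t, by rw [← FreeMonoid.ofList_toList q.1, hl]; rfl⟩
    set n' : ℕ := w'.length with hn'
    have hqlen' : q.1.length = n' + 1 := by
      rw [hw, FreeMonoid.length_mul, FreeMonoid.length_of]
      omega
    have hqle : Finsupp.single q 1 ≤ m :=
      Finsupp.single_le_iff.mpr (Nat.one_le_iff_ne_zero.mpr (Finsupp.mem_support_iff.mp hq))
    set m' := m - Finsupp.single q 1 with hm'def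
    have hm'add : m' + Finsupp.single q 1 = m := tsub_add_cancel_of_le hqle
    have hpc' : pCount m' = -1 - n' := by
      have h := congrArg pCount hm'add
      rw [nmn_pCount_add, nmn_pCount_single, hqlen', hpc] at h
      push_cast at h ⊢
      linarith
    set f := m'.filter (fun p => p.1.length = 0) with hfdef
    have hf : n' ≤ f.sum fun _ k => k := by
      have hneg : -((f.sum fun _ k => k : ℕ) : ℤ) ≤ pCount m' := by
        have h1 : ((f.sum fun _ k => k : ℕ) : ℤ) =
            ∑ p ∈ m'.support.filter (fun p => p.1.length = 0), (m' p : ℤ) := by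
          rw [Finsupp.sum, Finsupp.support_filter]
          push_cast
          refine Finset.sum_congr rfl fun p hp => ?_
          rw [hfdef, Finsupp.filter_apply, if_pos (Finset.mem_filter.mp hp).2]
        rw [h1]
        unfold pCount
        rw [Finsupp.sum, ← Finset.sum_neg_distrib, Finset.sum_filter]
        refine Finset.sum_le_sum fun p hp => ?_
        by_cases hp0 : p.1.length = 0
        · rw [if_pos hp0, hp0]
          push_cast
          ring_nf
          linarith
        · rw [if_neg hp0]
          have : (1 : ℤ) ≤ (p.1.length : ℤ) := by
            have : 1 ≤ p.1.length := Nat.one_le_iff_ne_zero.mpr hp0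
            exact_mod_cast this
          exact mul_nonneg (Int.natCast_nonneg _) (by linarith)
      rw [hpc'] at hneg
      omega
    obtain ⟨μ, hμf, hμsum⟩ := nmn_extract f n' hf
    have hμ0 : ∀ p ∈ μ.support, p.1.length = 0 := by
      intro p hp
      have h1 : μ p ≠ 0 := Finsupp.mem_support_iff.mp hp
      have h2 : μ p ≤ f p := Finsupp.le_def.mp hμf p
      by_contra hne
      rw [hfdef, Finsupp.filter_apply, if_neg hne] at h2
      omega
    have hμle : μ ≤ m' := le_trans hμf (Finsupp.le_def.mpr fun p => by
      rw [hfdef, Finsupp.filter_apply]; split <;> simp)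
    set m₁ := m' - μ with hm₁def
    have hm₁add : m₁ + μ = m' := tsub_add_cancel_of_le hμle
    set p₀ : FreeMonoid Ω × Y := (w', q.2) with hp₀def
    set m₂ := Finsupp.single p₀ 1 + μ with hm₂def
    have hμdegZ : ((μ.sum fun _ k => k : ℕ) : ℤ) = ∑ p ∈ μ.support, (μ p : ℤ) := by
      rw [Finsupp.sum]; push_cast; rfl
    have hpcμ : pCount μ = -(n' : ℤ) := by
      unfold pCount
      rw [Finsupp.sum]
      have h1 : ∑ p ∈ μ.support, (μ p : ℤ) * ((p.1.length : ℤ) - 1) =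
          ∑ p ∈ μ.support, -(μ p : ℤ) :=
        Finset.sum_congr rfl fun p hp => by rw [hμ0 p hp]; push_cast; ring
      rw [h1, Finset.sum_neg_distrib, ← hμdegZ, hμsum]
    have hmwμ : nmnWeight μ = 0 := by
      unfold nmnWeight
      rw [Finsupp.sum]
      exact Finset.sum_eq_zero fun p hp => by rw [hμ0 p hp]; ring
    have hpc₁ : pCount m₁ = -1 := by
      have h := congrArg pCount hm₁add
      rw [nmn_pCount_add, hpcμ, hpc'] at h
      linarith
    have hp₀len : p₀.1.length = n' := rfl
    have hpc₂ : pCount m₂ = -1 := by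
      rw [hm₂def, nmn_pCount_add, nmn_pCount_single, hpcμ, hp₀len]
      push_cast
      ring
    have hmwm : nmnWeight m = nmnWeight m₁ + ((n' + 1) * (n' + 1)) := by
      have h1 := congrArg nmnWeight hm'add
      have h2 := congrArg nmnWeight hm₁add
      rw [nmn_weight_add, nmn_weight_single, hqlen'] at h1
      rw [nmn_weight_add, hmwμ] at h2
      omega
    have hmw₂ : nmnWeight m₂ = n' * n' := by
      rw [hm₂def, nmn_weight_add, nmn_weight_single, hmwμ, hp₀len]
      omega
    have hsq : (n' + 1) * (n' + 1) = n' * n' + 2 * n' + 1 := by ring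
    have hmem₁ : monomial m₁ 1 ∈ N := ih m₁ (by omega) hpc₁
    have hmem₂ : monomial m₂ 1 ∈ N := ih m₂ (by omega) hpc₂
    have hμp₀ : μ p₀ = 0 := by
      by_contra h
      have h0 : p₀.1.length = 0 := hμ0 p₀ (Finsupp.mem_support_iff.mpr h)
      have h2 := nmn_term_le_sum μ (fun _ nn => nn) (fun _ => rfl) p₀
      rw [hμsum] at h2
      rw [hp₀len] at h0
      omega
    have hm₂p₀ : m₂ p₀ = 1 := by
      rw [hm₂def, Finsupp.add_apply, Finsupp.single_apply, if_pos rfl, hμp₀]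
    have hp₀mem : p₀ ∈ m₂.support := Finsupp.mem_support_iff.mpr (by rw [hm₂p₀]; exact one_ne_zero)
    have hq2 : ((FreeMonoid.of ω * p₀.1, p₀.2) : FreeMonoid Ω × Y) = q := by
      rw [hp₀def, ← hw]
    have hexp₀ : m₁ + (m₂ - Finsupp.single p₀ 1 +
        Finsupp.single (FreeMonoid.of ω * p₀.1, p₀.2) 1) = m := by
      rw [hq2, hm₂def, add_tsub_cancel_left, ← add_assoc, hm₁add, hm'add]
    have hsum := nmn_mul_deriv_monomial (k := k) ω m₁ m₂
    rw [← Finset.add_sum_erase _ _ hp₀mem, hm₂p₀, hexp₀, Nat.cast_one, one_smul] at hsum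
    have hrest : ∀ p ∈ m₂.support.erase p₀, (m₂ p : k) •
        monomial (m₁ + (m₂ - Finsupp.single p 1 +
          Finsupp.single (FreeMonoid.of ω * p.1, p.2) 1)) 1 ∈ N := by
      intro p hp
      obtain ⟨hpne, hps⟩ := Finset.mem_erase.mp hp
      have hpμ : p ∈ μ.support := by
        have hval : m₂ p = μ p := by
          rw [hm₂def, Finsupp.add_apply, Finsupp.single_apply, if_neg (fun h => hpne h.symm)]
          omega
        exact Finsupp.mem_support_iff.mpr (hval ▸ Finsupp.mem_support_iff.mp hps)
      have hplen : p.1.length = 0 := hμ0 p hpμ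
      have hn'pos : 1 ≤ n' := by
        have h1 := nmn_term_le_sum μ (fun _ nn => nn) (fun _ => rfl) p
        have h2 : μ p ≠ 0 := Finsupp.mem_support_iff.mp hpμ
        rw [hμsum] at h1
        omega
      have hpcE := nmn_pCount_term hps m₁ ω hpc₁ hpc₂
      have hple : Finsupp.single p 1 ≤ m₂ :=
        Finsupp.single_le_iff.mpr (Nat.one_le_iff_ne_zero.mpr (Finsupp.mem_support_iff.mp hps))
      have hsubadd : (m₂ - Finsupp.single p 1) + Finsupp.single p 1 = m₂ :=
        tsub_add_cancel_of_le hple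
      have hmwsub : nmnWeight (m₂ - Finsupp.single p 1) = n' * n' := by
        have h := congrArg nmnWeight hsubadd
        rw [nmn_weight_add, nmn_weight_single, hplen, hmw₂] at h
        omega
      have hmwE : nmnWeight (m₁ + (m₂ - Finsupp.single p 1 +
          Finsupp.single (FreeMonoid.of ω * p.1, p.2) 1)) = nmnWeight m₁ + n' * n' + 1 := by
        rw [nmn_weight_add, nmn_weight_add, hmwsub, nmn_weight_single]
        have : (FreeMonoid.of ω * p.1).length = 1 := by
          rw [FreeMonoid.length_mul, FreeMonoid.length_of, hplen]
        rw [this]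
        omega
      exact Submodule.smul_mem N _ (ih _ (by omega) hpcE)
    have hprod : monomial m₁ 1 * novikovDeriv k (X := Y) ω (monomial m₂ 1) ∈ N :=
      hmul ω _ _ hmem₁ hmem₂
    have hfinal : (monomial m 1 : MvPolynomial (FreeMonoid Ω × Y) k) =
        monomial m₁ 1 * novikovDeriv k (X := Y) ω (monomial m₂ 1) -
          ∑ p ∈ m₂.support.erase p₀, (m₂ p : k) •
            monomial (m₁ + (m₂ - Finsupp.single p 1 +
              Finsupp.single (FreeMonoid.of ω * p.1, p.2) 1)) 1 := by
      rw [hsum]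
      ring
    rw [hfinal]
    exact Submodule.sub_mem N hprod (Submodule.sum_mem N hrest)

end Aux

/-- The smallest `k`-submodule of `k[W(Ω) × X]` containing the generators
`X_{(1,x)}` and closed under all operations `(a, b) ↦ a · D_ω(b)` equals the `k`-linear span of
the populated monomials. -/
theorem noncommutingMultiNovikov_subalgebra_eq_span_populated
    (k : Type*) [Field k] (Ω X : Type*) :
    sInf {N : Submodule k (MvPolynomial (FreeMonoid Ω × X) k) |
        (∀ x : X, MvPolynomial.X (1, x) ∈ N) ∧
        ∀ (ω : Ω) (a b : MvPolynomial (FreeMonoid Ω × X) k),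
          a ∈ N → b ∈ N → a * novikovDeriv k ω b ∈ N} =
      Submodule.span k (populatedMonomials k Ω X) := by
  apply le_antisymm
  · apply sInf_le
    constructor
    · intro x
      apply Submodule.subset_span
      refine ⟨Finsupp.single (1, x) 1, ?_, rfl⟩
      rw [nmn_pCount_single]
      simp
    · intro ω a b ha hb
      induction ha, hb using Submodule.span_induction₂ with
      | mem_mem u v hu hv =>
        obtain ⟨m, hm, rfl⟩ := hu
        obtain ⟨s, hs, rfl⟩ := hv
        rw [nmn_mul_deriv_monomial]
        refine Submodule.sum_mem _ fun p hp => Submodule.smul_mem _ _ ?_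
        exact Submodule.subset_span ⟨_, nmn_pCount_term hp m ω hm hs, rfl⟩
      | zero_left v hv => rw [zero_mul]; exact Submodule.zero_mem _
      | zero_right u hu => rw [map_zero, mul_zero]; exact Submodule.zero_mem _
      | add_left x y z hx hy hz h1 h2 => rw [add_mul]; exact Submodule.add_mem _ h1 h2
      | add_right x y z hx hy hz h1 h2 => rw [map_add, mul_add]; exact Submodule.add_mem _ h1 h2
      | smul_left r x y hx hy h => rw [smul_mul_assoc]; exact Submodule.smul_mem _ _ h
      | smul_right r x y hx hy h => rw [Derivation.map_smul, mul_smul_comm]; exact Submodule.smul_mem _ _ h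
  · rw [Submodule.span_le]
    rintro u ⟨m, hm, rfl⟩
    rw [SetLike.mem_coe, Submodule.mem_sInf]
    intro N hN
    exact nmn_key N hN.1 hN.2 (nmnWeight m) m le_rfl hm
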